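/- Every skew category of partitions is closed under rotation: if R ⊆ P is a skew category of partitions and p ∈ R(k,l), then every rotation of p belongs to R. -/

import Mathlib

attribute [local instance] Classical.propDecidable

noncomputable section

namespace GTQG

/-! ## Partitions -/

/-- The set `P(k,l)` of partitions of `{1,…,k,1',…,l'}`, encoded as equivalence
relations (i.e. set partitions) on the disjoint union `Fin k ⊕ Fin l`. -/
abbrev Part (k l : ℕ) : Type := Setoid (Fin k ⊕ Fin l)

/-- `ker(i,j)`: the partition whose blocks are the fibers of the labelling
`x ↦ i x` on upper points and `y ↦ j y` on lower points. -/
def kerPartA {α : Type*} {k l : ℕ} (i : Fin k → α) (j : Fin l → α) : Part k l :=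
  Setoid.ker (Sum.elim i j)

/-- `ker(i,j)` for `ℕ`-valued multi-indices. -/
abbrev kerPart {k l : ℕ} (i : Fin k → ℕ) (j : Fin l → ℕ) : Part k l := kerPartA i j

/-- `ker(i) = ker(i,∅) ∈ P(k,0)`. -/
def kerPart0 {k : ℕ} (i : Fin k → ℕ) : Part k 0 := kerPartA i Fin.elim0

/-- The pair partition `⊔ ∈ P(0,2)`. -/
def pairPart : Part 0 2 := kerPartA Fin.elim0 (fun _ => (1 : ℕ))

/-- The identity partition `| ∈ P(1,1)`. -/
def idPart : Part 1 1 := kerPartA (fun _ => (1 : ℕ)) (fun _ => (1 : ℕ))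

/-- The partition `p̂ = ker((1,1,2),(2,1,1)) ∈ P(3,3)`. -/
def pHat : Part 3 3 := kerPart ![1, 1, 2] ![2, 1, 1]

/-- The involution `p* ∈ P(l,k)`, turning `p` upside-down. -/
def invol {k l : ℕ} (p : Part k l) : Part l k := Setoid.comap Sum.swap p

/-- The number of blocks of a partition. -/
def blockCount {k l : ℕ} (p : Part k l) : ℕ := Nat.card (Quotient p)

/-- The restriction of `p` to its upper row. -/
def upperSetoid {k l : ℕ} (p : Part k l) : Setoid (Fin k) := Setoid.comap Sum.inl p

/-- The restriction of `p` to its lower row. -/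
def lowerSetoid {k l : ℕ} (p : Part k l) : Setoid (Fin l) := Setoid.comap Sum.inr p

/-- `p ∈ P(k,l)` and `q ∈ P(l,l')` are compatible if the lower row of `p`
and the upper row of `q` have the same block structure
(i.e. `j^(p) ∈ S_∞(i^(q))`). -/
def Compatible {k l l' : ℕ} (p : Part k l) (q : Part l l') : Prop :=
  lowerSetoid p = upperSetoid q

section Comp

variable {k l l' : ℕ}

/-- The points of the vertical concatenation of `p ∈ P(k,l)` and `q ∈ P(l,l')`:
`k` upper points, `l` middle points, `l'` lower points. -/
abbrev CompCarrier (k l l' : ℕ) : Type := Fin k ⊕ (Fin l ⊕ Fin l')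

/-- Inclusion of the points of `p` into the vertical concatenation. -/
def topIncl : Fin k ⊕ Fin l → CompCarrier k l l' := Sum.map id Sum.inl

/-- Inclusion of the points of `q` into the vertical concatenation. -/
def botIncl : Fin l ⊕ Fin l' → CompCarrier k l l' := Sum.inr

/-- Two points of the vertical concatenation are directly connected if they are
connected by a string of `p` or by a string of `q`. -/
def compRel (p : Part k l) (q : Part l l') :
    CompCarrier k l l' → CompCarrier k l l' → Prop := fun x y =>
  (∃ u v, p u v ∧ x = topIncl u ∧ y = topIncl v) ∨
  (∃ u v, q u v ∧ x = botIncl u ∧ y = botIncl v)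

/-- The partition of all points of the vertical concatenation of `p` and `q`
into connected components. -/
def middleJoin (p : Part k l) (q : Part l l') : Setoid (CompCarrier k l l') :=
  Relation.EqvGen.setoid (compRel p q)

/-- The composition `qp ∈ P(k,l')`: vertical concatenation with all loops removed. -/
def compPart (p : Part k l) (q : Part l l') : Part k l' :=
  Setoid.comap (Sum.map id Sum.inr) (middleJoin p q)

/-- A point of the vertical concatenation is a middle point. -/
def IsMiddle (x : CompCarrier k l l') : Prop := ∃ m : Fin l, x = Sum.inr (Sum.inl m)

/-- The number `l(q,p)` of loops in the vertical concatenation of `p` and `q`: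
connected components consisting entirely of middle points. -/
def loopCount (p : Part k l) (q : Part l l') : ℕ :=
  Nat.card {c : Quotient (middleJoin p q) //
    ∀ x : CompCarrier k l l', Quotient.mk (middleJoin p q) x = c → IsMiddle x}

end Comp

/-- The direct sum of two set partitions. -/
def sumSetoid {α β : Type*} (p : Setoid α) (q : Setoid β) : Setoid (α ⊕ β) :=
  Setoid.ker (Sum.map (Quotient.mk p) (Quotient.mk q))

/-- The tensor product `p ⊗ q ∈ P(k+k',l+l')`: horizontal concatenation. -/
def tensorPart {k l k' l' : ℕ} (p : Part k l) (q : Part k' l') : Part (k + k') (l + l') :=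
  Setoid.comap
    (Sum.elim
      (fun z => Fin.addCases (fun a => Sum.inl (Sum.inl a)) (fun b => Sum.inr (Sum.inl b)) z)
      (fun z => Fin.addCases (fun a => Sum.inl (Sum.inr a)) (fun b => Sum.inr (Sum.inr b)) z))
    (sumSetoid p q)

/-! ## Rotations -/

/-- Rotating the outermost left upper leg to the lower row (reindexing map). -/
def rotULDmap (k l : ℕ) : Fin k ⊕ Fin (l + 1) → Fin (k + 1) ⊕ Fin l
  | .inl x => .inl x.succ
  | .inr y => Fin.cases (Sum.inl 0) (fun i => Sum.inr i) y

/-- Rotating the outermost left upper leg to the lower row. -/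
def rotULD {k l : ℕ} (p : Part (k + 1) l) : Part k (l + 1) :=
  Setoid.comap (rotULDmap k l) p

/-- Rotating the outermost left lower leg to the upper row (reindexing map). -/
def rotDLUmap (k l : ℕ) : Fin (k + 1) ⊕ Fin l → Fin k ⊕ Fin (l + 1)
  | .inl x => Fin.cases (Sum.inr 0) (fun i => Sum.inl i) x
  | .inr y => .inr y.succ

/-- Rotating the outermost left lower leg to the upper row. -/
def rotDLU {k l : ℕ} (p : Part k (l + 1)) : Part (k + 1) l :=
  Setoid.comap (rotDLUmap k l) p

/-- Rotating the outermost right upper leg to the lower row (reindexing map). -/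
def rotURDmap (k l : ℕ) : Fin k ⊕ Fin (l + 1) → Fin (k + 1) ⊕ Fin l
  | .inl x => .inl x.castSucc
  | .inr y => Fin.lastCases (Sum.inl (Fin.last k)) (fun i => Sum.inr i) y

/-- Rotating the outermost right upper leg to the lower row. -/
def rotURD {k l : ℕ} (p : Part (k + 1) l) : Part k (l + 1) :=
  Setoid.comap (rotURDmap k l) p

/-- Rotating the outermost right lower leg to the upper row (reindexing map). -/
def rotDRUmap (k l : ℕ) : Fin (k + 1) ⊕ Fin l → Fin k ⊕ Fin (l + 1)
  | .inl x => Fin.lastCases (Sum.inr (Fin.last l)) (fun i => Sum.inl i) x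
  | .inr y => .inr y.castSucc

/-- Rotating the outermost right lower leg to the upper row. -/
def rotDRU {k l : ℕ} (p : Part k (l + 1)) : Part (k + 1) l :=
  Setoid.comap (rotDRUmap k l) p

/-- One basic rotation step between partitions (with varying numbers of
upper and lower points). -/
inductive BasicRot : (Σ k l : ℕ, Part k l) → (Σ k l : ℕ, Part k l) → Prop
  | uld {k l : ℕ} (p : Part (k + 1) l) : BasicRot ⟨k + 1, l, p⟩ ⟨k, l + 1, rotULD p⟩
  | dlu {k l : ℕ} (p : Part k (l + 1)) : BasicRot ⟨k, l + 1, p⟩ ⟨k + 1, l, rotDLU p⟩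
  | urd {k l : ℕ} (p : Part (k + 1) l) : BasicRot ⟨k + 1, l, p⟩ ⟨k, l + 1, rotURD p⟩
  | dru {k l : ℕ} (p : Part k (l + 1)) : BasicRot ⟨k, l + 1, p⟩ ⟨k + 1, l, rotDRU p⟩

/-- `IsRotationOf q p`: `q` is obtained from `p` by finitely many basic rotations. -/
def IsRotationOf (q p : Σ k l : ℕ, Part k l) : Prop := Relation.ReflTransGen BasicRot p q

/-- A family `R ⊆ P` is closed under rotation. -/
def RotationClosed (R : ∀ k l : ℕ, Set (Part k l)) : Prop :=
  ∀ {k l k' l' : ℕ} (p : Part k l) (q : Part k' l'),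
    p ∈ R k l → IsRotationOf ⟨k', l', q⟩ ⟨k, l, p⟩ → q ∈ R k' l'

/-! ## (Skew) categories of partitions -/

/-- A skew category of partitions: a collection `R ⊆ P` containing `⊔` and `|`,
closed under involution, connected tensor products and conditioned composition. -/
structure IsSkewCategory (R : ∀ k l : ℕ, Set (Part k l)) : Prop where
  pair_mem : pairPart ∈ R 0 2
  id_mem : idPart ∈ R 1 1
  invol_mem : ∀ {k l : ℕ} {p : Part k l}, p ∈ R k l → invol p ∈ R l k
  conn_tensor_mem : ∀ {k l k' l' : ℕ} {p : Part k l} {q : Part k' l'}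
      (i : Fin k → ℕ) (j : Fin l → ℕ) (f : Fin k' → ℕ) (g : Fin l' → ℕ),
      p ∈ R k l → q ∈ R k' l' → kerPart i j = p → kerPart f g = q →
      kerPart (Fin.append i f) (Fin.append j g) ∈ R (k + k') (l + l')
  cond_comp_mem : ∀ {k l l' : ℕ} {p : Part k l} {q : Part l l'},
      p ∈ R k l → q ∈ R l l' → Compatible p q → compPart p q ∈ R k l'

/-- A category of partitions: a collection `C ⊆ P` containing `⊔` and `|`,
closed under involution, tensor products and composition. -/
structure IsCategoryOfPartitions (C : ∀ k l : ℕ, Set (Part k l)) : Prop where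
  pair_mem : pairPart ∈ C 0 2
  id_mem : idPart ∈ C 1 1
  invol_mem : ∀ {k l : ℕ} {p : Part k l}, p ∈ C k l → invol p ∈ C l k
  tensor_mem : ∀ {k l k' l' : ℕ} {p : Part k l} {q : Part k' l'},
      p ∈ C k l → q ∈ C k' l' → tensorPart p q ∈ C (k + k') (l + l')
  comp_mem : ∀ {k l l' : ℕ} {p : Part k l} {q : Part l l'},
      p ∈ C k l → q ∈ C l l' → compPart p q ∈ C k l'

/-- The skew category of partitions generated by a family `E`. -/
def skewGenerated (E : ∀ k l : ℕ, Set (Part k l)) : ∀ k l : ℕ, Set (Part k l) :=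
  fun k l => { p | ∀ R : ∀ k l : ℕ, Set (Part k l),
    IsSkewCategory R → (∀ k' l' : ℕ, E k' l' ⊆ R k' l') → p ∈ R k l }

/-- The category of partitions generated by a family `E`. -/
def catGenerated (E : ∀ k l : ℕ, Set (Part k l)) : ∀ k l : ℕ, Set (Part k l) :=
  fun k l => { p | ∀ C : ∀ k l : ℕ, Set (Part k l),
    IsCategoryOfPartitions C → (∀ k' l' : ℕ, E k' l' ⊆ C k' l') → p ∈ C k l }

end GTQG
namespace GTQG

/-! ## The free products `ℤ₂^{*∞}` and `ℤ₂^{*n}` -/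

/-- The cyclic group of order two (written multiplicatively). -/
abbrev Z2 : Type := Multiplicative (ZMod 2)

/-- `ℤ₂^{*∞}`, the free product of countably many copies of `ℤ₂`. -/
abbrev FreeZ2 : Type := Monoid.CoprodI (fun _ : ℕ => Z2)

/-- `ℤ₂^{*n}`, the free product of `n` copies of `ℤ₂`. -/
abbrev FreeZ2n (n : ℕ) : Type := Monoid.CoprodI (fun _ : Fin n => Z2)

/-- The generator `a_i` of `ℤ₂^{*∞}`. -/
def gen (i : ℕ) : FreeZ2 := Monoid.CoprodI.of (i := i) (Multiplicative.ofAdd (1 : ZMod 2))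

/-- The generator `a_i` of `ℤ₂^{*n}`. -/
def genn {n : ℕ} (i : Fin n) : FreeZ2n n :=
  Monoid.CoprodI.of (i := i) (Multiplicative.ofAdd (1 : ZMod 2))

/-- The word `a_i = a_{i₁} ⋯ a_{i_k} ∈ ℤ₂^{*∞}` associated to a multi-index. -/
def aWord {k : ℕ} (i : Fin k → ℕ) : FreeZ2 := (List.ofFn fun x => gen (i x)).prod

/-- The word `a_i = a_{i₁} ⋯ a_{i_k} ∈ ℤ₂^{*n}` associated to a multi-index. -/
def aWordn {n k : ℕ} (i : Fin k → Fin n) : FreeZ2n n := (List.ofFn fun x => genn (i x)).prod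

/-- The natural embedding `ℤ₂^{*n} → ℤ₂^{*∞}`. -/
def incl (n : ℕ) : FreeZ2n n →* FreeZ2 :=
  Monoid.CoprodI.lift (fun i => Monoid.CoprodI.of (M := fun _ : ℕ => Z2) (i := (i : ℕ)))

/-- The endomorphism of `ℤ₂^{*∞}` induced by a map `σ : ℕ → ℕ`, `a_i ↦ a_{σ i}`.
For bijective `σ` this is the action of `S_∞`, in general that of `sS_∞`. -/
def permEndo (σ : ℕ → ℕ) : FreeZ2 →* FreeZ2 :=
  Monoid.CoprodI.lift (fun i => Monoid.CoprodI.of (M := fun _ : ℕ => Z2) (i := σ i))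

/-- The endomorphism of `ℤ₂^{*n}` induced by a map `σ : Fin n → Fin n`. -/
def permEndon {n : ℕ} (σ : Fin n → Fin n) : FreeZ2n n →* FreeZ2n n :=
  Monoid.CoprodI.lift (fun i => Monoid.CoprodI.of (M := fun _ : Fin n => Z2) (i := σ i))

/-- A map `ℕ → ℕ` is finitely supported (moves only finitely many points). -/
def FinitelySupported (σ : ℕ → ℕ) : Prop := {x | σ x ≠ x}.Finite

/-- `F_∞(D) = S_∞({a_{ind(p)} : p ∈ D(k,0)})`, the set of all words `a_i` with
`ker(i) ∈ D(k,0)` (the `S_∞`-orbit of the words of minimal-index labellings). -/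
def Finfty (D : ∀ k l : ℕ, Set (Part k l)) : Set FreeZ2 :=
  { g | ∃ (k : ℕ) (i : Fin k → ℕ), kerPart0 i ∈ D k 0 ∧ g = aWord i }

end GTQG
namespace GTQG

/-! ## The maps `T̂_p` and `T_p` -/

/-- `(ℂ^n)^{⊗k}`, realised as functions on multi-indices (the standard basis
`e_{i₁} ⊗ ⋯ ⊗ e_{i_k}` is indexed by multi-indices `i ∈ {1,…,n}^k`). -/
abbrev MV (n k : ℕ) : Type := (Fin k → Fin n) → ℂ

/-- `δ̂_p(i,j) = 1` iff `(i,j) ∈ S_∞(ind(p))`, i.e. iff `ker(i,j) = p`. -/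
def hatDelta {k l : ℕ} (p : Part k l) {n : ℕ} (i : Fin k → Fin n) (j : Fin l → Fin n) : ℂ :=
  if kerPartA i j = p then 1 else 0

/-- `δ_p(i,j) = 1` iff `(i,j) ∈ sS_∞(ind(p))`, i.e. iff the labelling `(i,j)`
is constant on the blocks of `p`. -/
def softDelta {k l : ℕ} (p : Part k l) {n : ℕ} (i : Fin k → Fin n) (j : Fin l → Fin n) : ℂ :=
  if p ≤ kerPartA i j then 1 else 0

/-- The linear map `T̂_p^(n) : (ℂ^n)^{⊗k} → (ℂ^n)^{⊗l}`. -/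
def hatT (n : ℕ) {k l : ℕ} (p : Part k l) : MV n k →ₗ[ℂ] MV n l :=
  Matrix.mulVecLin (Matrix.of fun (j : Fin l → Fin n) (i : Fin k → Fin n) => hatDelta p i j)

/-- The linear map `T_p^(n) : (ℂ^n)^{⊗k} → (ℂ^n)^{⊗l}` of Banica–Speicher. -/
def softT (n : ℕ) {k l : ℕ} (p : Part k l) : MV n k →ₗ[ℂ] MV n l :=
  Matrix.mulVecLin (Matrix.of fun (j : Fin l → Fin n) (i : Fin k → Fin n) => softDelta p i j)

/-- The tensor product of linear maps, under the identification
`(ℂ^n)^{⊗k} ⊗ (ℂ^n)^{⊗k'} ≅ (ℂ^n)^{⊗(k+k')}` of basis vectors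
`(e_{i} ⊗ e_{f} ↦ e_{if}`, concatenation of multi-indices). -/
def tensorMap {n k l k' l' : ℕ} (S : MV n k →ₗ[ℂ] MV n l) (T : MV n k' →ₗ[ℂ] MV n l') :
    MV n (k + k') →ₗ[ℂ] MV n (l + l') :=
  Matrix.mulVecLin (Matrix.of fun (x : Fin (l + l') → Fin n) (y : Fin (k + k') → Fin n) =>
    LinearMap.toMatrix' S (fun a => x (Fin.castAdd l' a)) (fun a => y (Fin.castAdd k' a)) *
    LinearMap.toMatrix' T (fun b => x (Fin.natAdd l b)) (fun b => y (Fin.natAdd k b)))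

/-- The adjoint of a linear map `(ℂ^n)^{⊗k} → (ℂ^n)^{⊗l}` with respect to the
standard Hermitian inner products (conjugate-transpose of the matrix in the
standard bases). -/
def adjointMap {n k l : ℕ} (S : MV n k →ₗ[ℂ] MV n l) : MV n l →ₗ[ℂ] MV n k :=
  Matrix.mulVecLin (LinearMap.toMatrix' S).conjTranspose

/-- The map `ζ : ℂ → (ℂ^n)^{⊗2}`, `1 ↦ Σᵢ eᵢ ⊗ eᵢ`. -/
def zetaMap (n : ℕ) : MV n 0 →ₗ[ℂ] MV n 2 :=
  Matrix.mulVecLin (Matrix.of fun (j : Fin 2 → Fin n) (_ : Fin 0 → Fin n) =>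
    if j 0 = j 1 then (1 : ℂ) else 0)

/-- A tensor category with duals (of subspaces of `Hom((ℂ^n)^{⊗k}, (ℂ^n)^{⊗l})`). -/
structure IsTensorCategoryWithDuals (n : ℕ)
    (H : ∀ k l : ℕ, Submodule ℂ (MV n k →ₗ[ℂ] MV n l)) : Prop where
  tensor_mem : ∀ {k l k' l' : ℕ} (S : MV n k →ₗ[ℂ] MV n l) (T : MV n k' →ₗ[ℂ] MV n l'),
      S ∈ H k l → T ∈ H k' l' → tensorMap S T ∈ H (k + k') (l + l')
  comp_mem : ∀ {k l l' : ℕ} (S : MV n k →ₗ[ℂ] MV n l) (T : MV n l →ₗ[ℂ] MV n l'),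
      S ∈ H k l → T ∈ H l l' → T ∘ₗ S ∈ H k l'
  adjoint_mem : ∀ {k l : ℕ} (S : MV n k →ₗ[ℂ] MV n l), S ∈ H k l → adjointMap S ∈ H l k
  id_mem : LinearMap.id ∈ H 1 1
  zeta_mem : zetaMap n ∈ H 0 2

/-- The collection of subspaces `span{T̂_p^(n) : p ∈ R(k,l)}`. -/
def spanOf (n : ℕ) (R : ∀ k l : ℕ, Set (Part k l)) :
    ∀ k l : ℕ, Submodule ℂ (MV n k →ₗ[ℂ] MV n l) :=
  fun k l => Submodule.span ℂ {T | ∃ p ∈ R k l, T = hatT n p}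

/-- All connected tensor products of `p` and `q`. -/
def connTensorSet {k l k' l' : ℕ} (p : Part k l) (q : Part k' l') :
    Set (Part (k + k') (l + l')) :=
  { r | ∃ (i : Fin k → ℕ) (j : Fin l → ℕ) (f : Fin k' → ℕ) (g : Fin l' → ℕ),
      kerPart i j = p ∧ kerPart f g = q ∧ r = kerPart (Fin.append i f) (Fin.append j g) }

/-- All connected conditioned compositions of `p` and `q`. -/
def connCompSet {k l l' : ℕ} (p : Part k l) (q : Part l l') : Set (Part k l') :=
  { r | ∃ (i : Fin k → ℕ) (h : Fin l → ℕ) (g : Fin l' → ℕ),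
      kerPart i h = p ∧ kerPart h g = q ∧ r = kerPart i g }

end GTQG
namespace GTQG

/-! ### Auxiliary lemmas -/

lemma append_eval {α : Type*} {n m : ℕ} (f : Fin n → α) (g : Fin m → α) (x : Fin (n + m)) :
    Fin.append f g x = if h : (x : ℕ) < n then f ⟨x, h⟩ else g ⟨(x : ℕ) - n, by omega⟩ := by
  rcases x with ⟨v, hv⟩
  by_cases h : v < n
  · have hx : (⟨v, hv⟩ : Fin (n + m)) = Fin.castAdd m ⟨v, h⟩ := rfl
    rw [hx, Fin.append_left]
    simp [h]
  · have hx : (⟨v, hv⟩ : Fin (n + m)) = Fin.natAdd n ⟨v - n, by omega⟩ := by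
      ext; simp; omega
    rw [hx, Fin.append_right]
    simp [h]

lemma kerPart_rel {k l : ℕ} (i : Fin k → ℕ) (j : Fin l → ℕ) (a b : Fin k ⊕ Fin l) :
    kerPart i j a b ↔ Sum.elim i j a = Sum.elim i j b := Iff.rfl

lemma exists_kerPart {k l : ℕ} (p : Part k l) : ∃ i j, kerPart i j = p := by
  obtain ⟨f, hf⟩ := exists_injective_nat (Quotient p)
  refine ⟨f ∘ Quotient.mk p ∘ Sum.inl, f ∘ Quotient.mk p ∘ Sum.inr, ?_⟩
  apply Setoid.ext
  intro a b
  have : Sum.elim (f ∘ Quotient.mk p ∘ Sum.inl) (f ∘ Quotient.mk p ∘ Sum.inr)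
      = f ∘ Quotient.mk p := by funext x; cases x <;> rfl
  rw [kerPart_rel, this]
  simp only [Function.comp_apply]
  rw [hf.eq_iff, Quotient.eq]

end GTQG
namespace GTQG

lemma comap_ker {α β : Type*} (f : α → β) (g : β → ℕ) :
    Setoid.comap f (Setoid.ker g) = Setoid.ker (g ∘ f) :=
  Setoid.ext fun _ _ => Iff.rfl

lemma kerPart_eq_of_elim_eq {k l : ℕ} {i i' : Fin k → ℕ} {j j' : Fin l → ℕ}
    (h : ∀ a b : Fin k ⊕ Fin l,
      (Sum.elim i j a = Sum.elim i j b) ↔ (Sum.elim i' j' a = Sum.elim i' j' b)) :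
    kerPart i j = kerPart i' j' :=
  Setoid.ext h

lemma compatible_kerPart {k l l' : ℕ} (u : Fin k → ℕ) (h : Fin l → ℕ) (g : Fin l' → ℕ) :
    Compatible (kerPart u h) (kerPart h g) :=
  Setoid.ext fun _ _ => Iff.rfl

lemma compPart_kerPart {k l l' : ℕ} (u : Fin k → ℕ) (h : Fin l → ℕ) (g : Fin l' → ℕ)
    (hcov : ∀ x : Fin k, ∃ y, h y = u x) :
    compPart (kerPart u h) (kerPart h g) = kerPart u g := by
  set p := kerPart u h with hp
  set q := kerPart h g with hq
  have key : ∀ a b, Relation.EqvGen (compRel p q) a b →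
      Sum.elim u (Sum.elim h g) a = Sum.elim u (Sum.elim h g) b := by
    intro a b hab
    induction hab with
    | rel x y hxy =>
        rcases hxy with ⟨u', v', huv, hx, hy⟩ | ⟨u', v', huv, hx, hy⟩
        · subst hx; subst hy
          have huv' : Sum.elim u h u' = Sum.elim u h v' := huv
          cases u' <;> cases v' <;> simpa [topIncl] using huv'
        · subst hx; subst hy
          have huv' : Sum.elim h g u' = Sum.elim h g v' := huv
          cases u' <;> cases v' <;> simpa [botIncl] using huv'
    | refl x => rfl
    | symm _ _ _ ih => exact ih.symm
    | trans _ _ _ _ _ ih1 ih2 => exact ih1.trans ih2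
  apply Setoid.ext
  intro a b
  constructor
  · intro hab
    have h2 : Relation.EqvGen (compRel p q)
        (Sum.map id Sum.inr a) (Sum.map id Sum.inr b) := hab
    have := key _ _ h2
    show Sum.elim u g a = Sum.elim u g b
    cases a <;> cases b <;> simpa using this
  · intro hab
    have hab' : Sum.elim u g a = Sum.elim u g b := hab
    show Relation.EqvGen (compRel p q) (Sum.map id Sum.inr a) (Sum.map id Sum.inr b)
    have pstr : ∀ (x : Fin k) (y : Fin l), u x = h y →
        Relation.EqvGen (compRel p q) (Sum.inl x) (Sum.inr (Sum.inl y)) := by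
      intro x y hxy
      exact Relation.EqvGen.rel _ _ (Or.inl ⟨Sum.inl x, Sum.inr y,
        (show Sum.elim u h (Sum.inl x) = Sum.elim u h (Sum.inr y) from hxy), rfl, rfl⟩)
    have qstr : ∀ (y : Fin l) (z : Fin l'), h y = g z →
        Relation.EqvGen (compRel p q) (Sum.inr (Sum.inl y)) (Sum.inr (Sum.inr z)) := by
      intro y z hyz
      exact Relation.EqvGen.rel _ _ (Or.inr ⟨Sum.inl y, Sum.inr z,
        (show Sum.elim h g (Sum.inl y) = Sum.elim h g (Sum.inr z) from hyz), rfl, rfl⟩)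
    have cross : ∀ (x : Fin k) (z : Fin l'), u x = g z →
        Relation.EqvGen (compRel p q) (Sum.inl x) (Sum.inr (Sum.inr z)) := by
      intro x z hxz
      obtain ⟨y, hy⟩ := hcov x
      exact (pstr x y hy.symm).trans _ _ _ (qstr y z (hy.trans hxz))
    cases a with
    | inl x =>
        cases b with
        | inl x' =>
            exact Relation.EqvGen.rel _ _ (Or.inl ⟨Sum.inl x, Sum.inl x',
              (show Sum.elim u h (Sum.inl x) = Sum.elim u h (Sum.inl x') from hab'), rfl, rfl⟩)
        | inr z => exact cross x z hab'
    | inr z =>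
        cases b with
        | inl x => exact ((cross x z (show u x = g z from hab'.symm)).symm _ _)
        | inr z' =>
            exact Relation.EqvGen.rel _ _ (Or.inr ⟨Sum.inr z, Sum.inr z',
              (show Sum.elim h g (Sum.inr z) = Sum.elim h g (Sum.inr z') from hab'), rfl, rfl⟩)

end GTQG
namespace GTQG

lemma part00_subsingleton (p q : Part 0 0) : p = q := by
  apply Setoid.ext
  rintro (a | a) <;> exact a.elim0

lemma mem_cast {R : ∀ k l : ℕ, Set (Part k l)} {k l k' l' : ℕ}
    (hk : k' = k) (hl : l' = l) (a : Fin k' → ℕ) (b : Fin l' → ℕ)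
    (h : kerPart a b ∈ R k' l') :
    kerPart (a ∘ Fin.cast hk.symm) (b ∘ Fin.cast hl.symm) ∈ R k l := by
  subst hk; subst hl
  simpa [Fin.cast_refl, Function.comp_def] using h

lemma kerPart_const_pair (c : ℕ) :
    kerPart Fin.elim0 (fun _ : Fin 2 => c) = pairPart := by
  apply Setoid.ext
  rintro (a | a) (b | b) <;> first | exact a.elim0 | exact b.elim0 |
    (constructor <;> intro <;> rfl)

lemma kerPart_const_id (c : ℕ) :
    kerPart (fun _ : Fin 1 => c) (fun _ : Fin 1 => c) = idPart := by
  apply Setoid.ext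
  rintro (a | a) (b | b) <;> (constructor <;> intro <;> rfl)

lemma empty_mem {R : ∀ k l : ℕ, Set (Part k l)} (hR : IsSkewCategory R)
    (p : Part 0 0) : p ∈ R 0 0 := by
  have h1 : invol pairPart ∈ R 2 0 := hR.invol_mem hR.pair_mem
  have hcomp : Compatible pairPart (invol pairPart) := by
    apply Setoid.ext; intro a b; exact Iff.rfl
  have := hR.cond_comp_mem hR.pair_mem h1 hcomp
  rwa [part00_subsingleton (compPart pairPart (invol pairPart)) p] at this

lemma diag_mem {R : ∀ k l : ℕ, Set (Part k l)} (hR : IsSkewCategory R) :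
    ∀ {k : ℕ} (m : Fin k → ℕ), kerPart m m ∈ R k k := by
  intro k
  induction k with
  | zero => intro m; exact empty_mem hR _
  | succ n ih =>
      intro m
      have h1 := ih (m ∘ Fin.castSucc)
      have h2 := hR.conn_tensor_mem (m ∘ Fin.castSucc) (m ∘ Fin.castSucc)
        (fun _ : Fin 1 => m (Fin.last n)) (fun _ : Fin 1 => m (Fin.last n))
        h1 hR.id_mem rfl (kerPart_const_id _)
      have hm : Fin.append (m ∘ Fin.castSucc) (fun _ : Fin 1 => m (Fin.last n)) = m := by
        funext x
        rw [append_eval]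
        by_cases h : (x : ℕ) < n
        · simp only [h, dif_pos]
          exact congrArg m (Fin.ext rfl)
        · rw [dif_neg h]
          have hx := x.isLt
          exact congrArg m (Fin.ext (by simp [Fin.val_last]; omega)).symm
      rwa [hm] at h2

end GTQG
namespace GTQG

lemma rotURD_mem {R : ∀ k l : ℕ, Set (Part k l)} (hR : IsSkewCategory R)
    {k l : ℕ} {p : Part (k + 1) l} (hp : p ∈ R (k + 1) l) :
    rotURD p ∈ R k (l + 1) := by
  obtain ⟨i, j, hij⟩ := exists_kerPart p
  set c := i (Fin.last k) with hc
  set m : Fin k → ℕ := i ∘ Fin.castSucc with hm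
  -- r = t ⊗ ⊔ with connected labels
  have hr : kerPart (Fin.append m Fin.elim0) (Fin.append m (fun _ : Fin 2 => c))
      ∈ R k (k + 2) :=
    hR.conn_tensor_mem m m Fin.elim0 (fun _ : Fin 2 => c)
      (diag_mem hR m) hR.pair_mem rfl (kerPart_const_pair c)
  -- q' = p ⊗ | with connected labels
  have hq : kerPart (Fin.append i (fun _ : Fin 1 => c)) (Fin.append j (fun _ : Fin 1 => c))
      ∈ R (k + 2) (l + 1) :=
    hR.conn_tensor_mem i j (fun _ : Fin 1 => c) (fun _ : Fin 1 => c)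
      hp hR.id_mem hij (kerPart_const_id c)
  have hu : Fin.append m Fin.elim0 = m := by
    funext x
    rw [append_eval]
    rw [dif_pos (show (x : ℕ) < k from x.isLt)]
    exact congrArg m (Fin.ext rfl)
  have hmid : Fin.append m (fun _ : Fin 2 => c) = Fin.append i (fun _ : Fin 1 => c) := by
    funext x
    rw [append_eval m (fun _ : Fin 2 => c) x, append_eval i (fun _ : Fin 1 => c) x]
    have hx2 := x.isLt
    by_cases h1 : (x : ℕ) < k
    · rw [dif_pos h1, dif_pos (show (x : ℕ) < k + 1 by omega)]
      exact congrArg i (Fin.ext rfl)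
    · rw [dif_neg h1]
      by_cases h2 : (x : ℕ) < k + 1
      · rw [dif_pos h2]
        have : (⟨(x : ℕ), h2⟩ : Fin (k + 1)) = Fin.last k := Fin.ext (by simp; omega)
        rw [this]
      · rw [dif_neg h2]
  rw [hu, hmid] at hr
  have hcov : ∀ x : Fin k, ∃ y : Fin (k + 2),
      Fin.append i (fun _ : Fin 1 => c) y = m x := by
    intro x
    refine ⟨⟨(x : ℕ), by omega⟩, ?_⟩
    rw [append_eval, dif_pos (show ((⟨(x : ℕ), by omega⟩ : Fin (k + 2)) : ℕ) < k + 1 by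
      simpa using x.isLt.trans (Nat.lt_succ_self k))]
    exact congrArg i (Fin.ext rfl)
  have hcomp := hR.cond_comp_mem hr hq
    (compatible_kerPart m (Fin.append i (fun _ : Fin 1 => c)) (Fin.append j (fun _ : Fin 1 => c)))
  rw [compPart_kerPart m (Fin.append i (fun _ : Fin 1 => c))
    (Fin.append j (fun _ : Fin 1 => c)) hcov] at hcomp
  have hrot : rotURD p = kerPart m (Fin.append j (fun _ : Fin 1 => c)) := by
    rw [← hij]
    apply Setoid.ext
    intro a b
    have hfun : ∀ a : Fin k ⊕ Fin (l + 1),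
        Sum.elim i j (rotURDmap k l a)
          = Sum.elim m (Fin.append j (fun _ : Fin 1 => c)) a := by
      rintro (x | y)
      · rfl
      · refine Fin.lastCases ?_ (fun yy => ?_) y
        · show Sum.elim i j (Fin.lastCases (Sum.inl (Fin.last k))
            (fun i => Sum.inr i) (Fin.last l)) = _
          rw [Fin.lastCases_last]
          show c = Fin.append j (fun _ : Fin 1 => c) (Fin.last l)
          rw [append_eval, dif_neg (show ¬ ((Fin.last l : ℕ) < l) by simp)]
        · show Sum.elim i j (Fin.lastCases (Sum.inl (Fin.last k))
            (fun i => Sum.inr i) yy.castSucc) = _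
          rw [Fin.lastCases_castSucc]
          show j yy = Fin.append j (fun _ : Fin 1 => c) yy.castSucc
          rw [append_eval, dif_pos (show ((yy.castSucc : Fin (l + 1)) : ℕ) < l from yy.isLt)]
          exact congrArg j (Fin.ext rfl)
    show Sum.elim i j (rotURDmap k l a) = Sum.elim i j (rotURDmap k l b)
      ↔ Sum.elim m (Fin.append j (fun _ : Fin 1 => c)) a
        = Sum.elim m (Fin.append j (fun _ : Fin 1 => c)) b
    rw [hfun a, hfun b]
  rwa [hrot]

end GTQG
namespace GTQG

lemma rotULD_mem {R : ∀ k l : ℕ, Set (Part k l)} (hR : IsSkewCategory R)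
    {k l : ℕ} {p : Part (k + 1) l} (hp : p ∈ R (k + 1) l) :
    rotULD p ∈ R k (l + 1) := by
  obtain ⟨i, j, hij⟩ := exists_kerPart p
  set c := i 0 with hc
  set m : Fin k → ℕ := i ∘ Fin.succ with hm
  have hk1 : 0 + k = k := Nat.zero_add k
  have hl1 : 2 + k = k + 2 := Nat.add_comm 2 k
  have hk2 : 1 + (k + 1) = k + 2 := by omega
  have hl2 : 1 + l = l + 1 := Nat.add_comm 1 l
  -- r = ⊔ ⊗ t with connected labels
  have hr0 : kerPart (Fin.append Fin.elim0 m) (Fin.append (fun _ : Fin 2 => c) m)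
      ∈ R (0 + k) (2 + k) :=
    hR.conn_tensor_mem Fin.elim0 (fun _ : Fin 2 => c) m m
      hR.pair_mem (diag_mem hR m) (kerPart_const_pair c) rfl
  have hr := mem_cast (R := R) hk1 hl1 _ _ hr0
  -- q' = | ⊗ p with connected labels
  have hq0 : kerPart (Fin.append (fun _ : Fin 1 => c) i) (Fin.append (fun _ : Fin 1 => c) j)
      ∈ R (1 + (k + 1)) (1 + l) :=
    hR.conn_tensor_mem (fun _ : Fin 1 => c) (fun _ : Fin 1 => c) i j
      hR.id_mem hp (kerPart_const_id c) hij
  have hq := mem_cast (R := R) hk2 hl2 _ _ hq0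
  -- names for the label functions
  set H : Fin (k + 2) → ℕ := (Fin.append (fun _ : Fin 1 => c) i) ∘ Fin.cast hk2.symm with hH
  set G : Fin (l + 1) → ℕ := (Fin.append (fun _ : Fin 1 => c) j) ∘ Fin.cast hl2.symm with hG
  have hu : (Fin.append Fin.elim0 m) ∘ Fin.cast hk1.symm = m := by
    funext x
    show Fin.append Fin.elim0 m (Fin.cast hk1.symm x) = m x
    rw [append_eval, dif_neg (show ¬ ((Fin.cast hk1.symm x : ℕ) < 0) by omega)]
    exact congrArg m (Fin.ext (by simp))
  have hmid : (Fin.append (fun _ : Fin 2 => c) m) ∘ Fin.cast hl1.symm = H := by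
    funext x
    show Fin.append (fun _ : Fin 2 => c) m (Fin.cast hl1.symm x)
      = Fin.append (fun _ : Fin 1 => c) i (Fin.cast hk2.symm x)
    rw [append_eval, append_eval]
    have hx2 := x.isLt
    by_cases h1 : (x : ℕ) < 1
    · rw [dif_pos (show ((Fin.cast hl1.symm x : ℕ)) < 2 by simp; omega),
        dif_pos (show ((Fin.cast hk2.symm x : ℕ)) < 1 by show (x : ℕ) < 1; omega)]
    · by_cases h2 : (x : ℕ) < 2
      · rw [dif_pos (show ((Fin.cast hl1.symm x : ℕ)) < 2 by simp; omega),
          dif_neg (show ¬ ((Fin.cast hk2.symm x : ℕ)) < 1 by show ¬ (x : ℕ) < 1; omega)]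
        show c = i _
        rw [hc]
        exact congrArg i (Fin.ext (by simp; omega))
      · rw [dif_neg (show ¬ ((Fin.cast hl1.symm x : ℕ)) < 2 by simp; omega),
          dif_neg (show ¬ ((Fin.cast hk2.symm x : ℕ)) < 1 by show ¬ (x : ℕ) < 1; omega)]
        show m _ = i _
        rw [hm]
        show i (Fin.succ _) = i _
        exact congrArg i (Fin.ext (by simp [Fin.val_succ]; omega))
  rw [hu, hmid] at hr
  have hcov : ∀ x : Fin k, ∃ y : Fin (k + 2), H y = m x := by
    intro x
    refine ⟨⟨(x : ℕ) + 2, by omega⟩, ?_⟩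
    show Fin.append (fun _ : Fin 1 => c) i (Fin.cast hk2.symm ⟨(x : ℕ) + 2, by omega⟩) = m x
    rw [append_eval, dif_neg (show ¬ ((Fin.cast hk2.symm ⟨(x : ℕ) + 2, by omega⟩ : ℕ) < 1)
      by simp)]
    rw [hm]
    show i _ = i (Fin.succ x)
    exact congrArg i (Fin.ext (by simp [Fin.val_succ]))
  have hcomp := hR.cond_comp_mem hr hq (compatible_kerPart m H G)
  rw [compPart_kerPart m H G hcov] at hcomp
  have hrot : rotULD p = kerPart m G := by
    rw [← hij]
    apply Setoid.ext
    intro a b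
    have hfun : ∀ a : Fin k ⊕ Fin (l + 1),
        Sum.elim i j (rotULDmap k l a) = Sum.elim m G a := by
      rintro (x | y)
      · rfl
      · refine Fin.cases ?_ (fun yy => ?_) y
        · show Sum.elim i j (Fin.cases (Sum.inl 0) (fun i => Sum.inr i) (0 : Fin (l + 1))) = _
          rw [Fin.cases_zero]
          show i 0 = Fin.append (fun _ : Fin 1 => c) j (Fin.cast hl2.symm 0)
          rw [append_eval, dif_pos (show ((Fin.cast hl2.symm (0 : Fin (l + 1)) : ℕ)) < 1
            by simp)]
        · show Sum.elim i j (Fin.cases (Sum.inl 0) (fun i => Sum.inr i) yy.succ) = _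
          rw [Fin.cases_succ]
          show j yy = Fin.append (fun _ : Fin 1 => c) j (Fin.cast hl2.symm yy.succ)
          rw [append_eval, dif_neg (show ¬ ((Fin.cast hl2.symm yy.succ : ℕ)) < 1
            by simp)]
          exact congrArg j (Fin.ext (by simp [Fin.val_succ]))
    show Sum.elim i j (rotULDmap k l a) = Sum.elim i j (rotULDmap k l b)
      ↔ Sum.elim m G a = Sum.elim m G b
    rw [hfun a, hfun b]
  rwa [hrot]

end GTQG
namespace GTQG

lemma rotDLU_eq {k l : ℕ} (p : Part k (l + 1)) :
    rotDLU p = invol (rotULD (invol p)) := by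
  have hfun : ∀ a : Fin (k + 1) ⊕ Fin l,
      Sum.swap (rotULDmap l k (Sum.swap a)) = rotDLUmap k l a := by
    rintro (x | y)
    · refine Fin.cases ?_ (fun i => ?_) x <;> simp [rotULDmap, rotDLUmap]
    · simp [rotULDmap, rotDLUmap]
  apply Setoid.ext
  intro a b
  show p (rotDLUmap k l a) (rotDLUmap k l b) ↔
    p (Sum.swap (rotULDmap l k (Sum.swap a))) (Sum.swap (rotULDmap l k (Sum.swap b)))
  rw [hfun a, hfun b]

lemma rotDRU_eq {k l : ℕ} (p : Part k (l + 1)) :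
    rotDRU p = invol (rotURD (invol p)) := by
  have hfun : ∀ a : Fin (k + 1) ⊕ Fin l,
      Sum.swap (rotURDmap l k (Sum.swap a)) = rotDRUmap k l a := by
    rintro (x | y)
    · refine Fin.lastCases ?_ (fun i => ?_) x <;> simp [rotURDmap, rotDRUmap]
    · simp [rotURDmap, rotDRUmap]
  apply Setoid.ext
  intro a b
  show p (rotDRUmap k l a) (rotDRUmap k l b) ↔
    p (Sum.swap (rotURDmap l k (Sum.swap a))) (Sum.swap (rotURDmap l k (Sum.swap b)))
  rw [hfun a, hfun b]

end GTQG
namespace GTQG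

/-- Every skew category of partitions is closed under rotation. -/
theorem skewCategory_rotationClosed (R : ∀ k l : ℕ, Set (Part k l))
    (hR : IsSkewCategory R) : RotationClosed R := by
  intro k l k' l' p q hp hrot
  suffices H : ∀ s t : (Σ k l : ℕ, Part k l), Relation.ReflTransGen BasicRot s t →
      s.2.2 ∈ R s.1 s.2.1 → t.2.2 ∈ R t.1 t.2.1 from
    H ⟨k, l, p⟩ ⟨k', l', q⟩ hrot hp
  intro s t h
  induction h with
  | refl => exact id
  | tail h' step ih =>
      intro hs
      have hb := ih hs
      cases step with
      | uld p => exact rotULD_mem hR hb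
      | dlu p =>
          show rotDLU p ∈ R _ _
          rw [rotDLU_eq]
          exact hR.invol_mem (rotULD_mem hR (hR.invol_mem hb))
      | urd p => exact rotURD_mem hR hb
      | dru p =>
          show rotDRU p ∈ R _ _
          rw [rotDRU_eq]
          exact hR.invol_mem (rotURD_mem hR (hR.invol_mem hb))

end GTQG
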